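/- Let P₁, P₂ be orthogonal projections on a real Hilbert space H with ran P₁ ∩ ran P₂ = {0}. Then ‖(P₁P₂ + P₂P₁)/2‖ = ‖P₁P₂‖·(1 + ‖P₁P₂‖)/2. (In the Gibbs-sampler interpretation, the L² convergence rate of the random sequence scan Gibbs chain, whose Markov operator is (P₁P₂+P₂P₁)/2, equals ‖C‖(1+‖C‖)/2 where ‖C‖ = ‖P₁P₂‖.) -/

import Mathlib

open RealInnerProductSpace ContinuousLinearMap

section aux
variable {H : Type*} [NormedAddCommGroup H] [InnerProductSpace ℝ H] [CompleteSpace H]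

private lemma proj_apply_apply (P : H →L[ℝ] H) (hid : P * P = P) (x : H) : P (P x) = P x := by
  have := congrArg (fun A : H →L[ℝ] H => A x) hid
  simpa using this

private lemma proj_inner_self (P : H →L[ℝ] H) (hsa : IsSelfAdjoint P) (hid : P * P = P)
    (x : H) : ⟪P x, x⟫ = ‖P x‖ ^ 2 := by
  have h1 : ⟪P x, P x⟫ = ⟪x, P (P x)⟫ := hsa.isSymmetric x (P x)
  rw [proj_apply_apply P hid, real_inner_self_eq_norm_sq] at h1
  rw [real_inner_comm]
  exact h1.symm

private lemma proj_norm_apply_le (P : H →L[ℝ] H) (hsa : IsSelfAdjoint P) (hid : P * P = P)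
    (x : H) : ‖P x‖ ≤ ‖x‖ := by
  have h := proj_inner_self P hsa hid x
  have hcs : ⟪P x, x⟫ ≤ ‖P x‖ * ‖x‖ := real_inner_le_norm _ _
  rcases eq_or_lt_of_le (norm_nonneg (P x)) with h0 | h0
  · rw [← h0]; exact norm_nonneg x
  · have : ‖P x‖ * ‖P x‖ ≤ ‖P x‖ * ‖x‖ := by nlinarith
    exact le_of_mul_le_mul_left this h0

private lemma sa_norm_le (T : H →L[ℝ] H) (hT : IsSelfAdjoint T) (M : ℝ) (hM : 0 ≤ M)
    (h : ∀ x : H, |⟪T x, x⟫| ≤ M * ‖x‖ ^ 2) : ‖T‖ ≤ M := by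
  refine T.opNorm_le_bound hM (fun x => ?_)
  rcases eq_or_ne (T x) 0 with h0 | h0
  · simp [h0, mul_nonneg hM (norm_nonneg x)]
  rcases eq_or_ne x 0 with hx0 | hx0
  · simp [hx0] at h0 ⊢
  have hTx : (0 : ℝ) < ‖T x‖ := norm_pos_iff.2 h0
  have hx : (0 : ℝ) < ‖x‖ := norm_pos_iff.2 hx0
  set y := (‖x‖ / ‖T x‖) • T x with hy
  have hny : ‖y‖ = ‖x‖ := by
    rw [hy, norm_smul, Real.norm_eq_abs, abs_of_nonneg (by positivity)]
    field_simp
  have hinner : ⟪T x, y⟫ = ‖x‖ * ‖T x‖ := by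
    rw [hy, real_inner_smul_right, real_inner_self_eq_norm_sq]
    field_simp
  have hsymm : ∀ a b : H, ⟪T a, b⟫ = ⟪a, T b⟫ := fun a b => hT.isSymmetric a b
  have hpol : ⟪T (x + y), x + y⟫ - ⟪T (x - y), x - y⟫ = 4 * ⟪T x, y⟫ := by
    have hyx : ⟪T y, x⟫ = ⟪T x, y⟫ := by
      rw [hsymm y x, real_inner_comm]
    simp only [map_add, map_sub, inner_add_left, inner_add_right, inner_sub_left,
      inner_sub_right]
    linarith
  have hpar : ‖x + y‖ ^ 2 + ‖x - y‖ ^ 2 = 2 * (‖x‖ ^ 2 + ‖y‖ ^ 2) := by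
    rw [norm_add_sq_real, norm_sub_sq_real]; ring
  have h1 := h (x + y)
  have h2 := h (x - y)
  have habs1 : ⟪T (x + y), x + y⟫ ≤ M * ‖x + y‖ ^ 2 := le_trans (le_abs_self _) h1
  have habs2 : -(M * ‖x - y‖ ^ 2) ≤ ⟪T (x - y), x - y⟫ := neg_le_of_abs_le h2
  have hineq : 4 * (‖x‖ * ‖T x‖) ≤ 4 * (M * ‖x‖ ^ 2) := by
    have : 4 * ⟪T x, y⟫ ≤ M * (‖x + y‖ ^ 2 + ‖x - y‖ ^ 2) := by
      rw [← hpol]; nlinarith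
    rw [hinner] at this
    rw [hpar, hny] at this
    linarith
  have : ‖x‖ * ‖T x‖ ≤ ‖x‖ * (M * ‖x‖) := by nlinarith
  exact le_of_mul_le_mul_left this hx

end aux

set_option maxHeartbeats 2000000 in
theorem stmt15 {H : Type*} [NormedAddCommGroup H] [InnerProductSpace ℝ H] [CompleteSpace H]
    (P₁ P₂ : H →L[ℝ] H)
    (h1sa : IsSelfAdjoint P₁) (h1idem : P₁ * P₁ = P₁)
    (h2sa : IsSelfAdjoint P₂) (h2idem : P₂ * P₂ = P₂)
    (hranges : LinearMap.range (P₁ : H →ₗ[ℝ] H) ⊓ LinearMap.range (P₂ : H →ₗ[ℝ] H) = ⊥) :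
    ‖(2 : ℝ)⁻¹ • (P₁ * P₂ + P₂ * P₁)‖ = ‖P₁ * P₂‖ * (1 + ‖P₁ * P₂‖) / 2 := by
  set c := ‖P₁ * P₂‖ with hc
  set T := (2 : ℝ)⁻¹ • (P₁ * P₂ + P₂ * P₁) with hTdef
  have hc0 : (0 : ℝ) ≤ c := norm_nonneg _
  have hs1 : ∀ a b : H, ⟪P₁ a, b⟫ = ⟪a, P₁ b⟫ := fun a b => h1sa.isSymmetric a b
  have hs2 : ∀ a b : H, ⟪P₂ a, b⟫ = ⟪a, P₂ b⟫ := fun a b => h2sa.isSymmetric a b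
  have h1app := proj_apply_apply P₁ h1idem
  have h2app := proj_apply_apply P₂ h2idem
  have h1le := proj_norm_apply_le P₁ h1sa h1idem
  have h2le := proj_norm_apply_le P₂ h2sa h2idem
  have hc1 : c ≤ 1 := by
    rw [hc]
    refine opNorm_le_bound _ zero_le_one (fun x => ?_)
    rw [one_mul, ContinuousLinearMap.mul_apply]
    exact le_trans (h1le _) (h2le _)
  -- T is self-adjoint
  have hTsa : IsSelfAdjoint T := by
    rw [hTdef]
    have h12 : star (P₁ * P₂) = P₂ * P₁ := by
      rw [star_mul, h1sa.star_eq, h2sa.star_eq]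
    have h21 : star (P₂ * P₁) = P₁ * P₂ := by
      rw [star_mul, h1sa.star_eq, h2sa.star_eq]
    rw [IsSelfAdjoint]
    rw [star_smul, star_add, h12, h21]
    rw [add_comm]
    norm_num
  -- ⟪T x, x⟫ = ⟪P₁ x, P₂ x⟫
  have hinnerT : ∀ x : H, ⟪T x, x⟫ = ⟪P₁ x, P₂ x⟫ := by
    intro x
    have : T x = (2 : ℝ)⁻¹ • (P₁ (P₂ x) + P₂ (P₁ x)) := by
      rw [hTdef]; rfl
    rw [this, real_inner_smul_left, inner_add_left]
    have e1 : ⟪P₁ (P₂ x), x⟫ = ⟪P₂ x, P₁ x⟫ := hs1 (P₂ x) x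
    have e2 : ⟪P₂ (P₁ x), x⟫ = ⟪P₁ x, P₂ x⟫ := hs2 (P₁ x) x
    rw [e1, e2, real_inner_comm (P₂ x) (P₁ x)]
    ring
  -- key inequality on unit vectors
  have key : ∀ x : H, ‖x‖ = 1 → |⟪P₁ x, P₂ x⟫| ≤ c * (1 + c) / 2 := by
    intro x hx
    set a := ‖P₁ x‖ with hadef
    set b := ‖P₂ x‖ with hbdef
    set t := ⟪P₁ x, P₂ x⟫ with htdef
    have ha0 : 0 ≤ a := norm_nonneg _
    have hb0 : 0 ≤ b := norm_nonneg _
    have ha1 : a ≤ 1 := by rw [hadef, ← hx]; exact h1le x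
    have hb1 : b ≤ 1 := by rw [hbdef, ← hx]; exact h2le x
    -- (i) |t| ≤ c * (a*b)
    have ht1 : |t| ≤ c * (a * b) := by
      have e : t = ⟪P₁ x, (P₁ * P₂) (P₂ x)⟫ := by
        rw [ContinuousLinearMap.mul_apply, h2app, htdef, ← hs1, h1app]
      rw [e]
      calc |⟪P₁ x, (P₁ * P₂) (P₂ x)⟫| ≤ ‖P₁ x‖ * ‖(P₁ * P₂) (P₂ x)‖ :=
            abs_real_inner_le_norm _ _
        _ ≤ a * (c * b) := by
            refine mul_le_mul_of_nonneg_left ?_ ha0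
            exact le_opNorm _ _
        _ = c * (a * b) := by ring
    -- (ii) Gram inequality
    set s := Real.sqrt (1 - a ^ 2) with hsdef
    set r := Real.sqrt (1 - b ^ 2) with hrdef
    have hs0 : 0 ≤ s := Real.sqrt_nonneg _
    have hr0 : 0 ≤ r := Real.sqrt_nonneg _
    have hssq : s ^ 2 = 1 - a ^ 2 := Real.sq_sqrt (by nlinarith)
    have hrsq : r ^ 2 = 1 - b ^ 2 := Real.sq_sqrt (by nlinarith)
    have hux : ⟪P₁ x, x⟫ = a ^ 2 := proj_inner_self P₁ h1sa h1idem x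
    have hvx : ⟪P₂ x, x⟫ = b ^ 2 := proj_inner_self P₂ h2sa h2idem x
    have hxx : ⟪x, x⟫ = (1 : ℝ) := by rw [real_inner_self_eq_norm_sq, hx]; norm_num
    have c1 : ⟪x, P₁ x⟫ = a ^ 2 := by rw [real_inner_comm]; exact hux
    have c2 : ⟪x, P₂ x⟫ = b ^ 2 := by rw [real_inner_comm]; exact hvx
    have e1 : ⟪P₁ x - a ^ 2 • x, P₂ x - b ^ 2 • x⟫ = t - a ^ 2 * b ^ 2 := by
      simp only [inner_sub_left, inner_sub_right, real_inner_smul_left,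
        real_inner_smul_right, hxx, hux, hvx, c1, c2]
      rw [htdef]
      ring
    have e2 : ‖P₁ x - a ^ 2 • x‖ = a * s := by
      have hq : ‖P₁ x - a ^ 2 • x‖ ^ 2 = a ^ 2 * (1 - a ^ 2) := by
        rw [norm_sub_sq_real, real_inner_smul_right, hux, norm_smul]
        rw [Real.norm_eq_abs, abs_of_nonneg (by positivity)]
        rw [mul_pow, hx]
        ring
      have : ‖P₁ x - a ^ 2 • x‖ = Real.sqrt (a ^ 2 * (1 - a ^ 2)) := by
        rw [← hq, Real.sqrt_sq (norm_nonneg _)]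
      rw [this, Real.sqrt_mul (by positivity), Real.sqrt_sq ha0, hsdef]
    have e3 : ‖P₂ x - b ^ 2 • x‖ = b * r := by
      have hq : ‖P₂ x - b ^ 2 • x‖ ^ 2 = b ^ 2 * (1 - b ^ 2) := by
        rw [norm_sub_sq_real, real_inner_smul_right, hvx, norm_smul]
        rw [Real.norm_eq_abs, abs_of_nonneg (by positivity)]
        rw [mul_pow, hx]
        ring
      have : ‖P₂ x - b ^ 2 • x‖ = Real.sqrt (b ^ 2 * (1 - b ^ 2)) := by
        rw [← hq, Real.sqrt_sq (norm_nonneg _)]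
      rw [this, Real.sqrt_mul (by positivity), Real.sqrt_sq hb0, hrdef]
    have ht2 : a ^ 2 * b ^ 2 - (a * b) * (s * r) ≤ t := by
      have := abs_real_inner_le_norm (P₁ x - a ^ 2 • x) (P₂ x - b ^ 2 • x)
      rw [e1, e2, e3] at this
      have h' := neg_abs_le (t - a ^ 2 * b ^ 2)
      nlinarith [abs_nonneg (t - a ^ 2 * b ^ 2)]
    -- (iii) p + q ≤ 1
    have ht3 : a * b + s * r ≤ 1 := by
      nlinarith [sq_nonneg (a - b), sq_nonneg (s - r)]
    -- conclude
    set p := a * b with hpdef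
    set q := s * r with hqdef
    have hp0 : 0 ≤ p := mul_nonneg ha0 hb0
    have hq0 : 0 ≤ q := mul_nonneg hs0 hr0
    rcases eq_or_lt_of_le hp0 with hp | hp
    · have : |t| ≤ 0 := by rw [← hp] at ht1; linarith [ht1]
      have habs := abs_nonneg t
      nlinarith
    · -- p > 0 : from p² - pq ≤ t ≤ cp get p ≤ q + c, so 2p ≤ 1 + c
      have htcp : t ≤ c * p := le_trans (le_abs_self t) ht1
      have hple : p * p ≤ p * (q + c) := by nlinarith
      have hpqc : p ≤ q + c := le_of_mul_le_mul_left (by linarith [hple]) hp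
      have h2p : 2 * p ≤ 1 + c := by linarith
      calc |t| ≤ c * p := ht1
        _ ≤ c * ((1 + c) / 2) := by
            refine mul_le_mul_of_nonneg_left ?_ hc0
            linarith
        _ = c * (1 + c) / 2 := by ring
  -- quadratic-form bound for all x
  have hM0 : (0 : ℝ) ≤ c * (1 + c) / 2 := by nlinarith
  have hquad : ∀ x : H, |⟪T x, x⟫| ≤ (c * (1 + c) / 2) * ‖x‖ ^ 2 := by
    intro x
    rcases eq_or_ne x 0 with hx0 | hx0
    · simp [hx0]
    have hx : (0 : ℝ) < ‖x‖ := norm_pos_iff.2 hx0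
    set z := ‖x‖⁻¹ • x with hzdef
    have hz1 : ‖z‖ = 1 := norm_smul_inv_norm hx0
    have hz := key z hz1
    have hrel : ⟪P₁ z, P₂ z⟫ = ‖x‖⁻¹ * (‖x‖⁻¹ * ⟪P₁ x, P₂ x⟫) := by
      rw [hzdef, map_smul, map_smul, real_inner_smul_left, real_inner_smul_right]
    rw [hinnerT]
    rw [hrel] at hz
    rw [abs_mul, abs_mul, abs_of_nonneg (by positivity : (0:ℝ) ≤ ‖x‖⁻¹)] at hz
    have hxne : ‖x‖ ≠ 0 := ne_of_gt hx
    calc |⟪P₁ x, P₂ x⟫| = ‖x‖ ^ 2 * (‖x‖⁻¹ * (‖x‖⁻¹ * |⟪P₁ x, P₂ x⟫|)) := by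
          field_simp
      _ ≤ ‖x‖ ^ 2 * (c * (1 + c) / 2) := by
          refine mul_le_mul_of_nonneg_left hz (by positivity)
      _ = c * (1 + c) / 2 * ‖x‖ ^ 2 := by ring
  have hupper : ‖T‖ ≤ c * (1 + c) / 2 := sa_norm_le T hTsa _ hM0 hquad
  -- lower bound
  have hlower : c * (1 + c) / 2 ≤ ‖T‖ := by
    rcases eq_or_lt_of_le hc0 with hcz | hcz
    · rw [← hcz]; simpa using norm_nonneg T
    refine le_of_forall_pos_le_add (fun ε hε => ?_)
    set δ := min (c / 2) (2 * ε / 3) with hδdef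
    have hδ0 : 0 < δ := lt_min (by linarith) (by linarith)
    have hδc : δ ≤ c / 2 := min_le_left _ _
    have hδε : δ ≤ 2 * ε / 3 := min_le_right _ _
    have hcδ0 : 0 < c - δ := by linarith
    -- find x with (c - δ) * ‖x‖ < ‖(P₁ * P₂) x‖
    have hex : ∃ x : H, (c - δ) * ‖x‖ < ‖(P₁ * P₂) x‖ := by
      by_contra hcon
      push_neg at hcon
      have : c ≤ c - δ := by
        rw [hc]
        exact opNorm_le_bound _ (le_of_lt hcδ0) (fun x => hcon x)
      linarith
    obtain ⟨x, hxgood⟩ := hex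
    have hx0 : (0 : ℝ) < ‖x‖ := by
      by_contra hcon
      push_neg at hcon
      have hxz : ‖x‖ = 0 := le_antisymm hcon (norm_nonneg x)
      have : x = 0 := norm_eq_zero.1 hxz
      rw [this] at hxgood
      simp at hxgood
    obtain ⟨v, hvdef⟩ : ∃ w : H, w = P₂ x := ⟨_, rfl⟩
    have hPv : (c - δ) * ‖x‖ < ‖P₁ v‖ := by rw [hvdef]; exact hxgood
    have hv0 : (0 : ℝ) < ‖v‖ := by
      have h1 : (0 : ℝ) < ‖P₁ v‖ := lt_of_le_of_lt (by positivity) hPv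
      exact lt_of_lt_of_le h1 (h1le v)
    have hvne : v ≠ 0 := by
      intro hcon; rw [hcon] at hv0; simp at hv0
    obtain ⟨z, hzdef⟩ : ∃ w : H, w = ‖v‖⁻¹ • v := ⟨_, rfl⟩
    have hz1 : ‖z‖ = 1 := by rw [hzdef]; exact norm_smul_inv_norm hvne
    obtain ⟨γ, hγdef⟩ : ∃ g : ℝ, g = ‖P₁ z‖ := ⟨_, rfl⟩
    have hγnn : 0 ≤ γ := by rw [hγdef]; exact norm_nonneg _
    have hγv : γ * ‖v‖ = ‖P₁ v‖ := by
      rw [hγdef, hzdef, map_smul, norm_smul, Real.norm_eq_abs,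
        abs_of_nonneg (by positivity : (0:ℝ) ≤ ‖v‖⁻¹)]
      field_simp
    have hvx : ‖v‖ ≤ ‖x‖ := by rw [hvdef]; exact h2le x
    have hγgt : c - δ < γ := by
      have h2 : (c - δ) * ‖x‖ < γ * ‖x‖ := by
        calc (c - δ) * ‖x‖ < ‖P₁ v‖ := hPv
          _ = γ * ‖v‖ := hγv.symm
          _ ≤ γ * ‖x‖ := mul_le_mul_of_nonneg_left hvx hγnn
      exact lt_of_mul_lt_mul_right h2 (norm_nonneg x)
    have hγ0 : 0 < γ := lt_trans hcδ0 hγgt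
    have hγ1 : γ ≤ 1 := by
      rw [hγdef, ← hz1]
      exact h1le z
    have hP2z : P₂ z = z := by rw [hzdef, map_smul, hvdef, h2app]
    obtain ⟨u, hudef⟩ : ∃ w : H, w = P₁ z := ⟨_, rfl⟩
    have hP1u : P₁ u = u := by rw [hudef, h1app]
    have hnu : ‖u‖ = γ := by rw [hudef, hγdef]
    have huz : ⟪u, z⟫ = γ ^ 2 := by
      rw [hudef, hγdef]
      exact proj_inner_self P₁ h1sa h1idem z
    have hP2u_lb : γ ^ 2 ≤ ‖P₂ u‖ := by
      have e : ⟪P₂ u, z⟫ = γ ^ 2 := by rw [hs2, hP2z]; exact huz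
      calc γ ^ 2 = ⟪P₂ u, z⟫ := e.symm
        _ ≤ ‖P₂ u‖ * ‖z‖ := real_inner_le_norm _ _
        _ = ‖P₂ u‖ := by rw [hz1, mul_one]
    have hPuu : ⟪u, P₂ u⟫ = ‖P₂ u‖ ^ 2 := by
      rw [real_inner_comm]
      exact proj_inner_self P₂ h2sa h2idem u
    obtain ⟨y, hydef⟩ : ∃ w : H, w = z + γ⁻¹ • u := ⟨_, rfl⟩
    have hyP1 : P₁ y = (1 + γ⁻¹) • u := by
      rw [hydef, map_add, map_smul, hP1u, ← hudef, add_smul, one_smul]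
    have hyP2 : P₂ y = z + γ⁻¹ • P₂ u := by
      rw [hydef, map_add, map_smul, hP2z]
    have hval : γ * (1 + γ) ^ 2 ≤ ⟪P₁ y, P₂ y⟫ := by
      rw [hyP1, hyP2, real_inner_smul_left, inner_add_right, real_inner_smul_right,
        huz, hPuu]
      have hN : γ ^ 4 ≤ ‖P₂ u‖ ^ 2 := by nlinarith [hP2u_lb, sq_nonneg γ]
      have hγne : γ ≠ 0 := ne_of_gt hγ0
      have hinv0 : 0 ≤ γ⁻¹ := by positivity
      have hA : γ ^ 3 ≤ γ⁻¹ * ‖P₂ u‖ ^ 2 := by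
        have h' := mul_le_mul_of_nonneg_left hN hinv0
        have e1 : γ⁻¹ * γ ^ 4 = γ ^ 3 := by field_simp
        linarith [e1 ▸ h']
      have hB : γ ^ 2 ≤ γ⁻¹ * (γ⁻¹ * ‖P₂ u‖ ^ 2) := by
        have h' := mul_le_mul_of_nonneg_left
          (mul_le_mul_of_nonneg_left hN hinv0) hinv0
        have e2 : γ⁻¹ * (γ⁻¹ * γ ^ 4) = γ ^ 2 := by field_simp
        linarith [e2 ▸ h']
      have expand : (1 + γ⁻¹) * (γ ^ 2 + γ⁻¹ * ‖P₂ u‖ ^ 2)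
          = γ ^ 2 + γ⁻¹ * γ ^ 2 + γ⁻¹ * ‖P₂ u‖ ^ 2 + γ⁻¹ * (γ⁻¹ * ‖P₂ u‖ ^ 2) := by
        ring
      have hiγ2 : γ⁻¹ * γ ^ 2 = γ := by field_simp
      rw [expand, hiγ2]
      nlinarith [hA, hB]
    have hzu : ⟪z, u⟫ = γ ^ 2 := by rw [real_inner_comm]; exact huz
    have hny : ‖y‖ ^ 2 = 2 * (1 + γ) := by
      rw [hydef, norm_add_sq_real, real_inner_smul_right, hzu, norm_smul,
        Real.norm_eq_abs, abs_of_nonneg (by positivity : (0:ℝ) ≤ γ⁻¹), hz1, hnu]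
      have hγne : γ ≠ 0 := ne_of_gt hγ0
      field_simp
      ring
    have hTub : ⟪T y, y⟫ ≤ ‖T‖ * ‖y‖ ^ 2 := by
      calc ⟪T y, y⟫ ≤ ‖T y‖ * ‖y‖ := real_inner_le_norm _ _
        _ ≤ (‖T‖ * ‖y‖) * ‖y‖ := by
            refine mul_le_mul_of_nonneg_right (le_opNorm _ _) (norm_nonneg _)
        _ = ‖T‖ * ‖y‖ ^ 2 := by ring
    have hmain : γ * (1 + γ) ^ 2 ≤ ‖T‖ * (2 * (1 + γ)) := by
      rw [← hny]
      calc γ * (1 + γ) ^ 2 ≤ ⟪P₁ y, P₂ y⟫ := hval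
        _ = ⟪T y, y⟫ := (hinnerT y).symm
        _ ≤ ‖T‖ * ‖y‖ ^ 2 := hTub
    have hγT : γ * (1 + γ) / 2 ≤ ‖T‖ := by nlinarith [hγ0]
    -- conclude with arithmetic
    have hfinal : c * (1 + c) / 2 ≤ γ * (1 + γ) / 2 + ε := by
      have hfac : (c - γ) * (1 + c + γ) ≤ δ * (1 + c + γ) := by
        have hpos : (0 : ℝ) < 1 + c + γ := by linarith
        nlinarith [hγgt]
      nlinarith [hδε, hγ1, hc1, hδ0]
    linarith
  linarith
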